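/- For h ≥ 2, the generating function p_h(z,t) defined by p_2 = z/(1-zt) and p_{h+1} = -z + z(2-z)/(1-p_h) equals z(1+v) * (1 - R v q^{h-2}) / (1 - R v^2 q^{h-2}), where z = v/(1+3v+v^2), q = v(v+2)/(1+2v), and R = (-v^2 + vt - 3v + t - 1)/(v^2 t - v^2 + vt - 3v - 1). -/

import Mathlib

set_option maxHeartbeats 1000000 in
private theorem stmt9_step {K : Type*} [Field K] (v z q R w : K)
    (hd : 1 + 3 * v + v ^ 2 ≠ 0) (h2v : 1 + 2 * v ≠ 0)
    (hz : z = v / (1 + 3 * v + v ^ 2))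
    (hq : q = v * (v + 2) / (1 + 2 * v))
    (h1 : 1 - R * v ^ 2 * w ≠ 0)
    (h2 : 1 - R * v ^ 2 * (w * q) ≠ 0)
    (h3 : 1 - R * v ^ 2 * w - z * (1 + v) * (1 - R * v * w) ≠ 0) :
    -z + z * (2 - z) / (1 - z * (1 + v) * (1 - R * v * w) / (1 - R * v ^ 2 * w)) =
      z * (1 + v) * (1 - R * v * (w * q)) / (1 - R * v ^ 2 * (w * q)) := by
  have e1 : 1 - z * (1 + v) * (1 - R * v * w) / (1 - R * v ^ 2 * w) =
      (1 - R * v ^ 2 * w - z * (1 + v) * (1 - R * v * w)) / (1 - R * v ^ 2 * w) := by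
    rw [sub_div, div_self h1]
  rw [e1, div_div_eq_mul_div, add_div' _ _ _ h3, div_eq_div_iff h3 h2]
  subst hz hq
  have hd' : 1 + v * 3 + v ^ 2 ≠ 0 := by rwa [mul_comm v 3]
  have h2v' : 1 + v * 2 ≠ 0 := by rwa [mul_comm v 2]
  field_simp
  ring

set_option maxHeartbeats 1000000 in
private theorem stmt9_base {K : Type*} [Field K] (v t z R : K)
    (hd : 1 + 3 * v + v ^ 2 ≠ 0)
    (hz : z = v / (1 + 3 * v + v ^ 2))
    (hRden : v ^ 2 * t - v ^ 2 + v * t - 3 * v - 1 ≠ 0)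
    (hR : R = (-v ^ 2 + v * t - 3 * v + t - 1) / (v ^ 2 * t - v ^ 2 + v * t - 3 * v - 1))
    (hzt : 1 - z * t ≠ 0)
    (hden2 : 1 - R * v ^ 2 ≠ 0) :
    z / (1 - z * t) = z * (1 + v) * (1 - R * v) / (1 - R * v ^ 2) := by
  rw [div_eq_div_iff hzt hden2]
  subst hz hR
  have hd' : 1 + v * 3 + v ^ 2 ≠ 0 := by rwa [mul_comm v 3]
  have hR' : v * (v * (t - 1) + t - 3) - 1 ≠ 0 := by
    contrapose! hRden; linear_combination hRden
  field_simp
  ring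

/-- For `h ≥ 2`, the rational functions `p_h(z,t)` defined by `p₂ = z/(1-zt)`
and `p_{h+1} = -z + z(2-z)/(1-p_h)` equal
`z(1+v)(1 - R v q^{h-2})/(1 - R v² q^{h-2})`, where `z = v/(1+3v+v²)`,
`q = v(v+2)/(1+2v)` and `R = (-v²+vt-3v+t-1)/(v²t-v²+vt-3v-1)`. -/
theorem stmt9 {K : Type*} [Field K] (v t z q R : K) (p : ℕ → K)
    (hv : v ≠ 0) (hd : 1 + 3 * v + v ^ 2 ≠ 0) (h2v : 1 + 2 * v ≠ 0)
    (hz : z = v / (1 + 3 * v + v ^ 2))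
    (hq : q = v * (v + 2) / (1 + 2 * v))
    (hRden : v ^ 2 * t - v ^ 2 + v * t - 3 * v - 1 ≠ 0)
    (hR : R = (-v ^ 2 + v * t - 3 * v + t - 1) / (v ^ 2 * t - v ^ 2 + v * t - 3 * v - 1))
    (hzt : 1 - z * t ≠ 0)
    (hp2 : p 2 = z / (1 - z * t))
    (hpone : ∀ h, 2 ≤ h → 1 - p h ≠ 0)
    (hrec : ∀ h, 2 ≤ h → p (h + 1) = -z + z * (2 - z) / (1 - p h))
    (hden : ∀ h, 2 ≤ h → 1 - R * v ^ 2 * q ^ (h - 2) ≠ 0) :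
    ∀ h, 2 ≤ h →
      p h = z * (1 + v) * (1 - R * v * q ^ (h - 2)) / (1 - R * v ^ 2 * q ^ (h - 2)) := by
  intro h hh
  induction h, hh using Nat.le_induction with
  | base =>
      have hden2 := hden 2 le_rfl
      simp only [Nat.sub_self, pow_zero, mul_one] at hden2 ⊢
      rw [hp2]
      exact stmt9_base v t z R hd hz hRden hR hzt hden2
  | succ h hh ih =>
      have hd1 := hden h hh
      have hd2 : 1 - R * v ^ 2 * (q ^ (h - 2) * q) ≠ 0 := by
        have h' := hden (h + 1) (by omega)
        have hq1 : h + 1 - 2 = (h - 2) + 1 := by omega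
        rw [hq1, pow_succ q (h - 2)] at h'
        exact h'
      have hp1 := hpone h hh
      rw [ih] at hp1
      have hBA : 1 - R * v ^ 2 * q ^ (h - 2) -
          z * (1 + v) * (1 - R * v * q ^ (h - 2)) ≠ 0 := by
        have heq : 1 - R * v ^ 2 * q ^ (h - 2) -
            z * (1 + v) * (1 - R * v * q ^ (h - 2)) =
            (1 - z * (1 + v) * (1 - R * v * q ^ (h - 2)) /
              (1 - R * v ^ 2 * q ^ (h - 2))) * (1 - R * v ^ 2 * q ^ (h - 2)) := by
          field_simp
        rw [heq]
        exact mul_ne_zero hp1 hd1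
      have hq1 : h + 1 - 2 = (h - 2) + 1 := by omega
      rw [hrec h hh, ih, hq1, pow_succ q (h - 2)]
      exact stmt9_step v z q R (q ^ (h - 2)) hd h2v hz hq hd1 hd2 hBA
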